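/- Let f be monotone and ε-approximately submodular (f(X ∪ {v}) − f(X) ≥ f(Y ∪ {v}) − f(Y) − ε for X ⊆ Y, v ∉ Y), with optimum OPT over sets of size at most k. Define a sequence of sets X_0 = ∅ and X_{i+1} = X_i ∪ {v_i} where v_i is chosen so that f(X_{i+1}) − f(X_i) ≥ (OPT − f(X_i))/k − ε. Then f(X_k) ≥ (1 − (1 − 1/k)^k)(OPT − kε) ≥ (1 − 1/e)(OPT − kε). -/

import Mathlib

/-- Inductive approximation bound of the greedy-type sequence for monotone
ε-approximately submodular maximization with a size constraint. -/
theorem greedy_sequence_eps_approx_bound {V : Type*} [Fintype V] [DecidableEq V]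
    (f : Finset V → ℝ) (ε : ℝ) (hε : 0 ≤ ε) (k : ℕ) (hk : 1 ≤ k)
    (hmono : ∀ X Y : Finset V, X ⊆ Y → f X ≤ f Y) (hempty : f ∅ = 0)
    (OPT : ℝ)
    (hOPT : IsGreatest {y : ℝ | ∃ S : Finset V, S.card ≤ k ∧ f S = y} OPT)
    (X : ℕ → Finset V) (hX0 : X 0 = ∅)
    (hstep : ∀ i < k, ∃ v ∉ X i, X (i + 1) = insert v (X i) ∧
      f (X (i + 1)) - f (X i) ≥ (OPT - f (X i)) / k - ε) :
    f (X k) ≥ (1 - (1 - 1 / (k : ℝ)) ^ k) * (OPT - k * ε) ∧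
      f (X k) ≥ (1 - 1 / Real.exp 1) * (OPT - k * ε) := by
  have hkR : (1:ℝ) ≤ (k:ℝ) := by exact_mod_cast hk
  have hk0 : (0:ℝ) < k := lt_of_lt_of_le one_pos hkR
  have hkne : (k:ℝ) ≠ 0 := ne_of_gt hk0
  set q : ℝ := 1 - 1/(k:ℝ) with hq
  have hq0 : 0 ≤ q := by
    have h1 : 1/(k:ℝ) ≤ 1 := by rw [div_le_one hk0]; exact hkR
    simp only [hq]; linarith
  have hq1 : q ≤ 1 := by
    have : 0 < 1/(k:ℝ) := by positivity
    simp only [hq]; linarith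
  have hcard : ∀ i, i ≤ k → (X i).card ≤ i := by
    intro i hi
    induction i with
    | zero => simp [hX0]
    | succ n ih =>
      obtain ⟨v, hv, hins, _⟩ := hstep n (by omega)
      rw [hins]
      have h1 := Finset.card_insert_le v (X n)
      have h2 := ih (by omega)
      omega
  have hfle : ∀ i, i ≤ k → f (X i) ≤ OPT := by
    intro i hi
    exact hOPT.2 ⟨X i, le_trans (hcard i hi) hi, rfl⟩
  have key : ∀ i, i ≤ k → OPT - f (X i) ≤ q^i * OPT + (1 - q^i) * (k * ε) := by
    intro i hi
    induction i with
    | zero => simp [hX0, hempty]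
    | succ n ih =>
      obtain ⟨v, hv, hins, hge⟩ := hstep n (by omega)
      have hn := ih (by omega)
      have hnn : 0 ≤ OPT - f (X n) := by linarith [hfle n (by omega)]
      have hdiv : (OPT - f (X n)) / k = (1 - q) * (OPT - f (X n)) := by
        rw [hq]; field_simp; ring
      have h1 : OPT - f (X (n+1)) ≤ q * (OPT - f (X n)) + ε := by
        have hge' : f (X (n+1)) - f (X n) ≥ (OPT - f (X n)) / k - ε := hge
        rw [hdiv] at hge'
        nlinarith
      have h2 : q * (OPT - f (X n)) ≤ q * (q^n * OPT + (1 - q^n) * (k * ε)) :=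
        mul_le_mul_of_nonneg_left hn hq0
      have h3 : q * (q^n * OPT + (1 - q^n) * (k * ε)) + ε
          = q^(n+1) * OPT + (1 - q^(n+1)) * (k * ε) := by
        have hqk : (1 - q) * (k:ℝ) = 1 := by rw [hq]; field_simp; ring
        linear_combination (-ε) * hqk
      linarith
  have hkey := key k le_rfl
  have hfinal : f (X k) ≥ (1 - q^k) * (OPT - k * ε) := by nlinarith [hkey]
  have hqk0 : 0 ≤ q^k := pow_nonneg hq0 k
  have hqe : q^k ≤ 1 / Real.exp 1 := by
    have h1 : q ≤ Real.exp (-(1/(k:ℝ))) := by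
      have := Real.add_one_le_exp (-(1/(k:ℝ)))
      simp only [hq]; linarith
    have h2 : q^k ≤ (Real.exp (-(1/(k:ℝ))))^k := pow_le_pow_left₀ hq0 h1 k
    have h3 : (Real.exp (-(1/(k:ℝ))))^k = Real.exp ((k:ℝ) * (-(1/(k:ℝ)))) := by
      rw [← Real.exp_nat_mul]
    have h4 : (k:ℝ) * (-(1/(k:ℝ))) = -1 := by field_simp
    have h5 : Real.exp (-1) = 1 / Real.exp 1 := by
      rw [Real.exp_neg]; ring
    rw [h3, h4, h5] at h2
    exact h2
  refine ⟨hfinal, ?_⟩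
  have hf0 : 0 ≤ f (X k) := by
    rw [← hempty]; exact hmono ∅ (X k) (Finset.empty_subset _)
  have hexp1 : (1:ℝ) ≤ Real.exp 1 := by
    have := Real.add_one_le_exp (1:ℝ); linarith
  have he0 : 0 < Real.exp 1 := Real.exp_pos 1
  have he1 : 1 / Real.exp 1 ≤ 1 := by
    rw [div_le_one he0]; exact hexp1
  by_cases hcase : 0 ≤ OPT - k * ε
  · have : (1 - 1 / Real.exp 1) * (OPT - k * ε) ≤ (1 - q^k) * (OPT - k * ε) := by
      apply mul_le_mul_of_nonneg_right _ hcase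
      linarith
    linarith
  · push_neg at hcase
    have hpos : 0 ≤ 1 - 1 / Real.exp 1 := by linarith
    nlinarith
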